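/- Let n ≥ 1 and let 1 ≤ r ≤ n. Then Σ_{σ ∈ S_n} (fix(σ) − 1)^r = n! · Σ_{s=0}^{r} (−1)^{r−s} C(r,s) B_s, where C(r,s) is the binomial coefficient. Representation-theoretically, this says the multiplicity of the trivial representation of S_n in the r-th tensor power of the standard ((n−1)-dimensional) irreducible representation S^{(n−1,1)} equals Σ_{s=0}^{r} (−1)^{r−s} C(r,s) B_s. -/

import Mathlib

open Equiv Finset

/-- Stirling numbers of the second kind. -/
def stirling : ℕ → ℕ → ℕ
  | 0, 0 => 1
  | 0, _ + 1 => 0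
  | _ + 1, 0 => 0
  | n + 1, k + 1 => (k + 1) * stirling n (k + 1) + stirling n k

/-- The `s`-th Bell number, `B_s = Σ_{q=0}^{s} S(s,q)`. -/
def bell (s : ℕ) : ℕ := ∑ q ∈ Finset.range (s + 1), stirling s q

/-- The number of fixed points of a permutation of `Fin n`. -/
def fixCount {n : ℕ} (σ : Equiv.Perm (Fin n)) : ℕ :=
  (Finset.univ.filter fun x => σ x = x).card

lemma stirling_eq_zero : ∀ s q, s < q → stirling s q = 0
  | 0, _+1, _ => rfl
  | s+1, q+1, h => by
      have h1 : s < q + 1 := Nat.lt_of_succ_lt h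
      have h2 : s < q := Nat.succ_lt_succ_iff.mp h
      show (q+1) * stirling s (q+1) + stirling s q = 0
      rw [stirling_eq_zero s (q+1) h1, stirling_eq_zero s q h2]
      simp

lemma stirling_one : ∀ m, stirling (m+1) 1 = 1
  | 0 => rfl
  | m+1 => by
      show 1 * stirling (m+1) 1 + stirling (m+1) 0 = 1
      rw [stirling_one m]
      rfl

lemma stirling_succ_sum (n : ℕ) : ∀ k, stirling (n+1) (k+1) =
    ∑ j ∈ Finset.range (n+1), n.choose j * stirling j k := by
  induction n with
  | zero => intro k; cases k <;> rfl
  | succ n ih =>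
    intro k
    cases k with
    | zero =>
      rw [stirling_one, Finset.sum_eq_single 0]
      · rfl
      · intro j _ hj
        obtain ⟨i, rfl⟩ := Nat.exists_eq_succ_of_ne_zero hj
        simp [show stirling (i+1) 0 = 0 from rfl]
      · intro h; simp at h
    | succ k =>
      have peel : ∑ j ∈ Finset.range (n+2), (n+1).choose j * stirling j (k+1)
          = ∑ i ∈ Finset.range (n+1), (n+1).choose (i+1) * stirling (i+1) (k+1) := by
        rw [Finset.sum_range_succ']
        simp [show stirling 0 (k+1) = 0 from rfl]
      rw [peel]
      have expand : ∀ i ∈ Finset.range (n+1), (n+1).choose (i+1) * stirling (i+1) (k+1)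
          = (n.choose i * ((k+1) * stirling i (k+1)) + n.choose i * stirling i k)
            + n.choose (i+1) * stirling (i+1) (k+1) := by
        intro i _
        rw [Nat.choose_succ_succ]
        show (n.choose i + n.choose (i+1)) * ((k+1) * stirling i (k+1) + stirling i k) = _
        have : stirling (i+1) (k+1) = (k+1) * stirling i (k+1) + stirling i k := rfl
        rw [this]; ring
      rw [Finset.sum_congr rfl expand, Finset.sum_add_distrib, Finset.sum_add_distrib]
      have S3 : ∑ i ∈ Finset.range (n+1), n.choose (i+1) * stirling (i+1) (k+1)
          = stirling (n+1) (k+2) := by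
        have : ∑ j ∈ Finset.range (n+2), n.choose j * stirling j (k+1)
            = ∑ i ∈ Finset.range (n+1), n.choose (i+1) * stirling (i+1) (k+1) := by
          rw [Finset.sum_range_succ']
          simp [show stirling 0 (k+1) = 0 from rfl]
        rw [← this, Finset.sum_range_succ, Nat.choose_succ_self, zero_mul, add_zero, ← ih (k+1)]
      have S1 : ∑ i ∈ Finset.range (n+1), n.choose i * ((k+1) * stirling i (k+1))
          = (k+1) * stirling (n+1) (k+2) := by
        rw [ih (k+1), Finset.mul_sum]
        apply Finset.sum_congr rfl
        intro i _; ring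
      have S2 : ∑ i ∈ Finset.range (n+1), n.choose i * stirling i k
          = stirling (n+1) (k+1) := (ih k).symm
      rw [S1, S2, S3]
      show (k+2) * stirling (n+1) (k+2) + stirling (n+1) (k+1) = _
      ring

lemma sum_stirling_eq_bell {j s : ℕ} (h : j ≤ s) :
    ∑ q ∈ Finset.range (s+1), stirling j q = bell j := by
  unfold bell
  symm
  apply Finset.sum_subset (Finset.range_subset_range.mpr (by omega))
  intro q _ hq
  exact stirling_eq_zero j q (by simp at hq; omega)

lemma bell_succ (s : ℕ) : bell (s+1) = ∑ k ∈ Finset.range (s+1), s.choose k * bell k := by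
  have h : bell (s+1) = ∑ q ∈ Finset.range (s+2), stirling (s+1) q := rfl
  rw [h, Finset.sum_range_succ']
  rw [show stirling (s+1) 0 = 0 from rfl, add_zero]
  calc ∑ q ∈ Finset.range (s+1), stirling (s+1) (q+1)
      = ∑ q ∈ Finset.range (s+1), ∑ j ∈ Finset.range (s+1), s.choose j * stirling j q := by
        exact Finset.sum_congr rfl fun q _ => stirling_succ_sum s q
    _ = ∑ j ∈ Finset.range (s+1), ∑ q ∈ Finset.range (s+1), s.choose j * stirling j q :=
        Finset.sum_comm
    _ = ∑ j ∈ Finset.range (s+1), s.choose j * bell j := by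
        apply Finset.sum_congr rfl
        intro j hj
        rw [← Finset.mul_sum, sum_stirling_eq_bell (by simp at hj; omega)]

def fixedOfSubtypeEquiv {n : ℕ} (x : Fin (n+1)) (τ : Perm {y : Fin (n+1) // y ≠ x}) :
    {y : Fin (n+1) // Perm.ofSubtype τ y = y} ≃
      Option {z : {y : Fin (n+1) // y ≠ x} // τ z = z} where
  toFun y := if h : y.1 = x then none else
    some ⟨⟨y.1, h⟩, Subtype.ext ((Perm.ofSubtype_apply_of_mem τ h).symm.trans y.2)⟩
  invFun o := o.elim ⟨x, Perm.ofSubtype_apply_of_not_mem τ (not_not_intro rfl)⟩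
    (fun z => ⟨z.1.1, by rw [Perm.ofSubtype_apply_of_mem τ z.1.2, z.2]⟩)
  left_inv y := by
    by_cases h : y.1 = x
    · simp only [h, dif_pos]
      exact Subtype.ext h.symm
    · simp only [h, dif_neg, not_false_iff]
      rfl
  right_inv o := by
    cases o with
    | none => simp
    | some z => simp [z.1.2]

lemma fixCount_ofSubtype {n : ℕ} (x : Fin (n+1)) (τ : Perm {y : Fin (n+1) // y ≠ x}) :
    fixCount (Perm.ofSubtype τ) = (Finset.univ.filter fun z => τ z = z).card + 1 := by
  have h1 : fixCount (Perm.ofSubtype τ)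
      = Fintype.card {y : Fin (n+1) // Perm.ofSubtype τ y = y} :=
    (Fintype.card_subtype _).symm
  rw [h1, Fintype.card_congr (fixedOfSubtypeEquiv x τ), Fintype.card_option,
    Fintype.card_subtype]

lemma filter_fixed_permCongr {α β : Type*} [Fintype α] [Fintype β] [DecidableEq α]
    [DecidableEq β] (e : α ≃ β) (τ : Perm α) :
    (Finset.univ.filter fun b => (e.permCongr τ) b = b).card
      = (Finset.univ.filter fun a => τ a = a).card := by
  rw [← Fintype.card_subtype, ← Fintype.card_subtype]
  apply Fintype.card_congr
  exact (Equiv.subtypeEquiv e.symm (by intro b; simp [Equiv.permCongr_apply, Equiv.eq_symm_apply]))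

def permFixEquiv {n : ℕ} (x : Fin (n+1)) :
    Perm {y : Fin (n+1) // y ≠ x} ≃ {σ : Perm (Fin (n+1)) // σ x = x} :=
  (Equiv.Perm.subtypeEquivSubtypePerm (fun y => y ≠ x)).trans
    (Equiv.subtypeEquivRight (by
      intro σ
      constructor
      · intro h; exact h x (not_not_intro rfl)
      · intro h a ha; rw [not_not] at ha; subst ha; exact h))

lemma permFixEquiv_val {n : ℕ} (x : Fin (n+1)) (τ : Perm {y : Fin (n+1) // y ≠ x}) :
    (permFixEquiv x τ).1 = Perm.ofSubtype τ := rfl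

lemma card_ne_subtype {n : ℕ} (x : Fin (n+1)) :
    Fintype.card {y : Fin (n+1) // y ≠ x} = n := by
  simp [Fintype.card_subtype_compl, Fintype.card_subtype_eq]

lemma inner_eq {n s : ℕ} (x : Fin (n+1)) :
    ∑ σ : Perm (Fin (n+1)), (if σ x = x then fixCount σ ^ s else 0)
      = ∑ τ : Perm (Fin n), (fixCount τ + 1) ^ s := by
  classical
  rw [← Finset.sum_filter]
  rw [Finset.sum_subtype (p := fun σ : Perm (Fin (n+1)) => σ x = x)
    (Finset.univ.filter fun σ : Perm (Fin (n+1)) => σ x = x)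
    (by simp) (fun σ => fixCount σ ^ s)]
  rw [← Equiv.sum_comp (permFixEquiv x) (fun σ => fixCount σ.1 ^ s)]
  have d : {y : Fin (n+1) // y ≠ x} ≃ Fin n := Fintype.equivFinOfCardEq (card_ne_subtype x)
  rw [← Equiv.sum_comp d.permCongr (fun τ : Perm (Fin n) => (fixCount τ + 1) ^ s)]
  apply Finset.sum_congr rfl
  intro τ _
  rw [permFixEquiv_val, fixCount_ofSubtype x τ]
  unfold fixCount
  rw [filter_fixed_permCongr d τ]

lemma step_count (n s : ℕ) :
    ∑ σ : Perm (Fin (n+1)), fixCount σ ^ (s+1)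
      = (n+1) * ∑ τ : Perm (Fin n), (fixCount τ + 1) ^ s := by
  have h1 : ∀ σ : Perm (Fin (n+1)), fixCount σ ^ (s+1)
      = ∑ x : Fin (n+1), (if σ x = x then fixCount σ ^ s else 0) := by
    intro σ
    rw [← Finset.sum_filter, Finset.sum_const, smul_eq_mul]
    show fixCount σ ^ (s+1) = (Finset.univ.filter fun x => σ x = x).card * fixCount σ ^ s
    rw [← fixCount]
    ring
  calc ∑ σ : Perm (Fin (n+1)), fixCount σ ^ (s+1)
      = ∑ σ : Perm (Fin (n+1)), ∑ x : Fin (n+1), (if σ x = x then fixCount σ ^ s else 0) :=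
        Finset.sum_congr rfl fun σ _ => h1 σ
    _ = ∑ x : Fin (n+1), ∑ σ : Perm (Fin (n+1)), (if σ x = x then fixCount σ ^ s else 0) :=
        Finset.sum_comm
    _ = ∑ _x : Fin (n+1), ∑ τ : Perm (Fin n), (fixCount τ + 1) ^ s :=
        Finset.sum_congr rfl fun x _ => inner_eq x
    _ = (n+1) * ∑ τ : Perm (Fin n), (fixCount τ + 1) ^ s := by
        rw [Finset.sum_const, Finset.card_univ, Fintype.card_fin, smul_eq_mul]


lemma moment : ∀ s n, s ≤ n → ∑ σ : Perm (Fin n), fixCount σ ^ s = n.factorial * bell s := by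
  intro s
  induction s using Nat.strong_induction_on with
  | _ s ih =>
    match s with
    | 0 =>
      intro n _
      rw [show bell 0 = 1 from rfl, mul_one]
      simp [Finset.card_univ, Fintype.card_perm]
    | s+1 =>
      intro n hs
      obtain ⟨m, rfl⟩ : ∃ m, n = m + 1 := ⟨n - 1, by omega⟩
      rw [step_count]
      have expand : ∀ τ : Perm (Fin m), (fixCount τ + 1) ^ s
          = ∑ k ∈ Finset.range (s+1), fixCount τ ^ k * s.choose k := by
        intro τ
        rw [add_pow]
        simp
      rw [Finset.sum_congr rfl (fun τ _ => expand τ), Finset.sum_comm]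
      have hterm : ∀ k ∈ Finset.range (s+1),
          ∑ τ : Perm (Fin m), fixCount τ ^ k * s.choose k
            = m.factorial * bell k * s.choose k := by
        intro k hk
        rw [← Finset.sum_mul, ih k (by simp at hk; omega) m (by simp at hk; omega)]
      rw [Finset.sum_congr rfl hterm, Nat.factorial_succ, bell_succ, Finset.mul_sum,
        Finset.mul_sum]
      exact Finset.sum_congr rfl fun k _ => by ring

theorem multiplicity_trivial_in_standard_tensor_power (n r : ℕ) (hn : 1 ≤ n)
    (hr1 : 1 ≤ r) (hrn : r ≤ n) :
    ∑ σ : Equiv.Perm (Fin n), ((fixCount σ : ℤ) - 1) ^ r =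
      (Nat.factorial n : ℤ) *
        ∑ s ∈ Finset.range (r + 1), (-1 : ℤ) ^ (r - s) * (Nat.choose r s : ℤ) * (bell s : ℤ) := by
  have key : ∀ k, k ≤ n → ∑ σ : Equiv.Perm (Fin n), (fixCount σ : ℤ) ^ k
      = (Nat.factorial n : ℤ) * (bell k : ℤ) := by
    intro k hk
    have h := moment k n hk
    have h2 : ((∑ σ : Equiv.Perm (Fin n), fixCount σ ^ k : ℕ) : ℤ)
        = ((n.factorial * bell k : ℕ) : ℤ) := by rw [h]
    push_cast at h2
    exact h2
  calc ∑ σ : Equiv.Perm (Fin n), ((fixCount σ : ℤ) - 1) ^ r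
      = ∑ σ : Equiv.Perm (Fin n), ∑ s ∈ Finset.range (r + 1),
          (fixCount σ : ℤ) ^ s * (-1 : ℤ) ^ (r - s) * (Nat.choose r s : ℤ) := by
        apply Finset.sum_congr rfl
        intro σ _
        rw [sub_eq_add_neg, add_pow]
    _ = ∑ s ∈ Finset.range (r + 1),
          (-1 : ℤ) ^ (r - s) * (Nat.choose r s : ℤ) *
            ∑ σ : Equiv.Perm (Fin n), (fixCount σ : ℤ) ^ s := by
        rw [Finset.sum_comm]
        apply Finset.sum_congr rfl
        intro s _
        rw [Finset.mul_sum]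
        apply Finset.sum_congr rfl
        intro σ _
        ring
    _ = (Nat.factorial n : ℤ) *
          ∑ s ∈ Finset.range (r + 1), (-1 : ℤ) ^ (r - s) * (Nat.choose r s : ℤ) * (bell s : ℤ) := by
        rw [Finset.mul_sum]
        apply Finset.sum_congr rfl
        intro s hs
        rw [key s (by simp at hs; omega)]
        ring
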